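/- Core determinant inequality: let β > 0 and define h(x) = (e^{βx} − 1)/(x·e^{βx/2}) for x > 0 and h(0) = β. Then for all u, v, w > 0 one has h(v)·h(u+v+w) > h(u)·h(w); equivalently, u·w·(e^{(u+v+w)β} − 1)·(e^{vβ} − 1) > v·(u+v+w)·(e^{wβ} − 1)·(e^{uβ} − 1)·e^{vβ}. -/

import Mathlib

open Real

/-- `h(x) = (e^{βx} − 1)/(x·e^{βx/2})` for `x > 0`, with `h(0) = β`. -/
noncomputable def hfun (β x : ℝ) : ℝ :=
  if x = 0 then β else (Real.exp (β * x) - 1) / (x * Real.exp (β * x / 2))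


private lemma sinh_lt_mul_cosh {x : ℝ} (hx : 0 < x) : Real.sinh x < x * Real.cosh x := by
  have h : StrictMonoOn (fun y : ℝ => y * Real.cosh y - Real.sinh y) (Set.Ici 0) := by
    apply strictMonoOn_of_deriv_pos (convex_Ici 0)
    · exact ((continuous_id.mul Real.continuous_cosh).sub Real.continuous_sinh).continuousOn
    · intro y hy
      rw [interior_Ici, Set.mem_Ioi] at hy
      have hd : HasDerivAt (fun y : ℝ => y * Real.cosh y - Real.sinh y) (y * Real.sinh y) y := by
        have := ((hasDerivAt_id y).mul (Real.hasDerivAt_cosh y)).sub (Real.hasDerivAt_sinh y)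
        refine this.congr_deriv ?_
        simp [mul_comm]
      rw [hd.deriv]
      exact mul_pos hy (Real.sinh_pos_iff.2 hy)
  have := h (Set.self_mem_Ici) (Set.mem_Ici.2 hx.le) hx
  simpa using this

private lemma sinh_div_mono {x y : ℝ} (hx : 0 < x) (hxy : x < y) :
    Real.sinh x * y < Real.sinh y * x := by
  have hy : 0 < y := hx.trans hxy
  have h : StrictMonoOn (fun t : ℝ => Real.sinh t / t) (Set.Ioi 0) := by
    apply strictMonoOn_of_deriv_pos (convex_Ioi 0)
    · exact ContinuousOn.div Real.continuous_sinh.continuousOn continuousOn_id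
        (fun t ht => ne_of_gt ht)
    · intro t ht
      rw [interior_Ioi, Set.mem_Ioi] at ht
      have hd : HasDerivAt (fun t : ℝ => Real.sinh t / t)
          ((Real.cosh t * t - Real.sinh t * 1) / t ^ 2) t :=
        (Real.hasDerivAt_sinh t).div (hasDerivAt_id t) (ne_of_gt ht)
      rw [hd.deriv]
      apply div_pos _ (pow_pos ht 2)
      have := sinh_lt_mul_cosh ht
      nlinarith
  have := h (Set.mem_Ioi.2 hx) (Set.mem_Ioi.2 hy) hxy
  rw [div_lt_div_iff₀ hx hy] at this
  linarith

/-- Core sinh inequality: for positive a b c,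
`a*c*sinh b*sinh(a+b+c) > b*(a+b+c)*sinh a*sinh c`. -/
private lemma core_sinh {a b c : ℝ} (ha : 0 < a) (hb : 0 < b) (hc : 0 < c) :
    b * (a + b + c) * (Real.sinh a * Real.sinh c) <
      a * c * (Real.sinh b * Real.sinh (a + b + c)) := by
  have hsa := Real.sinh_pos_iff.2 ha
  have hsb := Real.sinh_pos_iff.2 hb
  have hsc := Real.sinh_pos_iff.2 hc
  have hac : 0 < a + c := by linarith
  have hs : 0 < a + b + c := by linarith
  have hsac := Real.sinh_pos_iff.2 hac
  have hss := Real.sinh_pos_iff.2 hs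
  -- Claim B : a*c*sinh(a+c) > (a+c)*sinh a*sinh c
  have hB : (a + c) * (Real.sinh a * Real.sinh c) < a * c * Real.sinh (a + c) := by
    rw [Real.sinh_add]
    have h1 := sinh_lt_mul_cosh ha
    have h2 := sinh_lt_mul_cosh hc
    have k1 : Real.sinh a * (c * Real.sinh c) < a * Real.cosh a * (c * Real.sinh c) :=
      mul_lt_mul_of_pos_right h1 (mul_pos hc hsc)
    have k2 : Real.sinh c * (a * Real.sinh a) < c * Real.cosh c * (a * Real.sinh a) :=
      mul_lt_mul_of_pos_right h2 (mul_pos ha hsa)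
    nlinarith [k1, k2]
  -- monotonicity: sinh(a+c)/(a+c) < sinh(a+b+c)/(a+b+c)
  have hM : Real.sinh (a + c) * (a + b + c) < Real.sinh (a + b + c) * (a + c) :=
    sinh_div_mono hac (by linarith)
  -- sinh b > b
  have hC : b < Real.sinh b := Real.self_lt_sinh_iff.2 hb
  -- combine
  have step1 : b * (a + b + c) * (Real.sinh a * Real.sinh c) <
      b * (a + b + c) / (a + c) * (a * c * Real.sinh (a + c)) := by
    rw [div_mul_eq_mul_div, lt_div_iff₀ hac]
    have hpos : 0 < b * (a + b + c) := mul_pos hb hs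
    nlinarith
  have step2 : b * (a + b + c) / (a + c) * (a * c * Real.sinh (a + c)) ≤
      b * (a * c * Real.sinh (a + b + c)) := by
    rw [div_mul_eq_mul_div, div_le_iff₀ hac]
    have := mul_le_mul_of_nonneg_left hM.le (by positivity : (0:ℝ) ≤ b * (a * c))
    nlinarith
  have step3 : b * (a * c * Real.sinh (a + b + c)) <
      a * c * (Real.sinh b * Real.sinh (a + b + c)) := by
    have := mul_lt_mul_of_pos_right hC (by positivity : (0:ℝ) < a * c * Real.sinh (a + b + c))
    nlinarith
  linarith

private lemma exp_sub_one (x : ℝ) :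
    Real.exp x - 1 = 2 * Real.exp (x / 2) * Real.sinh (x / 2) := by
  rw [Real.sinh_eq]
  rw [show (2 : ℝ) * Real.exp (x / 2) * ((Real.exp (x / 2) - Real.exp (-(x / 2))) / 2) =
    Real.exp (x / 2) * Real.exp (x / 2) - Real.exp (x / 2) * Real.exp (-(x / 2)) by ring]
  rw [← Real.exp_add, ← Real.exp_add]
  norm_num

set_option maxHeartbeats 1000000 in
/-- **Core determinant inequality.** For all `β > 0` and `u, v, w > 0`,
`h(v)·h(u+v+w) > h(u)·h(w)`; equivalently,
`u·w·(e^{(u+v+w)β} − 1)·(e^{vβ} − 1) > v·(u+v+w)·(e^{wβ} − 1)·(e^{uβ} − 1)·e^{vβ}`. -/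
theorem core_determinant_inequality (β u v w : ℝ) (hβ : 0 < β)
    (hu : 0 < u) (hv : 0 < v) (hw : 0 < w) :
    hfun β v * hfun β (u + v + w) > hfun β u * hfun β w ∧
      u * w * (Real.exp ((u + v + w) * β) - 1) * (Real.exp (v * β) - 1) >
        v * (u + v + w) * (Real.exp (w * β) - 1) * (Real.exp (u * β) - 1) *
          Real.exp (v * β) := by
  set a := β * u / 2 with ha_def
  set b := β * v / 2 with hb_def
  set c := β * w / 2 with hc_def
  have ha : 0 < a := by positivity
  have hb : 0 < b := by positivity
  have hc : 0 < c := by positivity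
  have hs : 0 < u + v + w := by linarith
  have core := core_sinh ha hb hc
  -- core in u,v,w variables
  have core' : v * (u + v + w) * (Real.sinh a * Real.sinh c) <
      u * w * (Real.sinh b * Real.sinh (a + b + c)) := by
    have h4 : (0:ℝ) < β ^ 2 / 4 := by positivity
    have := core
    have e1 : a * c = β ^ 2 / 4 * (u * w) := by rw [ha_def, hc_def]; ring
    have e2 : b * (a + b + c) = β ^ 2 / 4 * (v * (u + v + w)) := by
      rw [ha_def, hb_def, hc_def]; ring
    rw [e1, e2] at this
    nlinarith
  have hsb := Real.sinh_pos_iff.2 hb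
  have hss : 0 < Real.sinh (a + b + c) := Real.sinh_pos_iff.2 (by linarith)
  have hsa := Real.sinh_pos_iff.2 ha
  have hsc := Real.sinh_pos_iff.2 hc
  -- identities
  have ev : Real.exp (v * β) - 1 = 2 * Real.exp b * Real.sinh b := by
    have := exp_sub_one (v * β)
    rw [show v * β / 2 = b by rw [hb_def]; ring] at this
    exact this
  have eu : Real.exp (u * β) - 1 = 2 * Real.exp a * Real.sinh a := by
    have := exp_sub_one (u * β)
    rw [show u * β / 2 = a by rw [ha_def]; ring] at this
    exact this
  have ew : Real.exp (w * β) - 1 = 2 * Real.exp c * Real.sinh c := by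
    have := exp_sub_one (w * β)
    rw [show w * β / 2 = c by rw [hc_def]; ring] at this
    exact this
  have es : Real.exp ((u + v + w) * β) - 1 =
      2 * Real.exp (a + b + c) * Real.sinh (a + b + c) := by
    have := exp_sub_one ((u + v + w) * β)
    rw [show (u + v + w) * β / 2 = a + b + c by rw [ha_def, hb_def, hc_def]; ring] at this
    exact this
  have evexp : Real.exp (v * β) = Real.exp b * Real.exp b := by
    rw [← Real.exp_add]; congr 1; rw [hb_def]; ring
  have esplit : Real.exp (a + b + c) = Real.exp a * Real.exp b * Real.exp c := by
    rw [← Real.exp_add, ← Real.exp_add]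
  constructor
  · -- hfun part
    have hvne : v ≠ 0 := ne_of_gt hv
    have hsne : u + v + w ≠ 0 := ne_of_gt hs
    have hune : u ≠ 0 := ne_of_gt hu
    have hwne : w ≠ 0 := ne_of_gt hw
    rw [hfun, hfun, hfun, hfun, if_neg hvne, if_neg hsne, if_neg hune, if_neg hwne]
    have hxv : Real.exp (β * v) - 1 = 2 * Real.exp b * Real.sinh b := by
      rw [show β * v = v * β by ring]; exact ev
    have hxu : Real.exp (β * u) - 1 = 2 * Real.exp a * Real.sinh a := by
      rw [show β * u = u * β by ring]; exact eu
    have hxw : Real.exp (β * w) - 1 = 2 * Real.exp c * Real.sinh c := by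
      rw [show β * w = w * β by ring]; exact ew
    have hxs : Real.exp (β * (u + v + w)) - 1 =
        2 * Real.exp (a + b + c) * Real.sinh (a + b + c) := by
      rw [show β * (u + v + w) = (u + v + w) * β by ring]; exact es
    have hbv : β * v / 2 = b := by rw [hb_def]
    have hbu : β * u / 2 = a := by rw [ha_def]
    have hbw : β * w / 2 = c := by rw [hc_def]
    have hbs : β * (u + v + w) / 2 = a + b + c := by rw [ha_def, hb_def, hc_def]; ring
    rw [hxv, hxu, hxw, hxs, hbv, hbu, hbw, hbs]
    have h1 : (2 * Real.exp b * Real.sinh b) / (v * Real.exp b) = 2 * Real.sinh b / v := by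
      field_simp
    have h2 : (2 * Real.exp (a + b + c) * Real.sinh (a + b + c)) /
        ((u + v + w) * Real.exp (a + b + c)) = 2 * Real.sinh (a + b + c) / (u + v + w) := by
      field_simp
    have h3 : (2 * Real.exp a * Real.sinh a) / (u * Real.exp a) = 2 * Real.sinh a / u := by
      field_simp
    have h4 : (2 * Real.exp c * Real.sinh c) / (w * Real.exp c) = 2 * Real.sinh c / w := by
      field_simp
    rw [h1, h2, h3, h4]
    rw [div_mul_div_comm, div_mul_div_comm, gt_iff_lt, div_lt_div_iff₀ (by positivity) (by positivity)]
    linarith [core']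
  · rw [gt_iff_lt, es, ev, eu, ew, evexp, esplit]
    have e1 : v * (u + v + w) * (2 * Real.exp c * Real.sinh c) * (2 * Real.exp a * Real.sinh a) *
        (Real.exp b * Real.exp b) =
        4 * (Real.exp a * Real.exp c * Real.exp b ^ 2) *
          (v * (u + v + w) * (Real.sinh a * Real.sinh c)) := by ring
    have e2 : u * w * (2 * (Real.exp a * Real.exp b * Real.exp c) * Real.sinh (a + b + c)) *
        (2 * Real.exp b * Real.sinh b) =
        4 * (Real.exp a * Real.exp c * Real.exp b ^ 2) *
          (u * w * (Real.sinh b * Real.sinh (a + b + c))) := by ring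
    rw [e1, e2]
    exact mul_lt_mul_of_pos_left core' (by positivity)
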